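/- Let V₁, V₂ be (m−1)-dimensional subspaces of Lⁿ with dim(V₁ ∩ V₂) ≥ m−2, and let x ∈ Lⁿ be nonzero. Then dist(x, V₂) ≤ dist(x, V₁) + dist(V₁, V₂) when L ⊆ ℂ. -/

import Mathlib

/-- The Gram determinant `det (⟪x i, y j⟫)` of two `m`-tuples of vectors.
For pure wedge products `X = x₁ ∧ ⋯ ∧ xₘ` and `Y = y₁ ∧ ⋯ ∧ yₘ` this is the
inner 𝕜 product `⟪X, Y⟫` in `⋀ᵐ U`, for the inner 𝕜 product on `⋀ᵐ U` making
wedge products of orthonormal vectors orthonormal. -/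
noncomputable def gramDet (𝕜 : Type*) [RCLike 𝕜] {E : Type*} [NormedAddCommGroup E]
    [InnerProductSpace 𝕜 E] {m : ℕ} (x y : Fin m → E) : 𝕜 :=
  Matrix.det (Matrix.of fun i j => (inner 𝕜 (x i) (y j) : 𝕜))

/-- The norm `‖x₁ ∧ ⋯ ∧ xₘ‖` of a pure wedge product, computed as the square
root of the Gram determinant. -/
noncomputable def wedgeNorm (𝕜 : Type*) [RCLike 𝕜] {E : Type*} [NormedAddCommGroup E]
    [InnerProductSpace 𝕜 E] {m : ℕ} (x : Fin m → E) : ℝ :=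
  Real.sqrt (RCLike.re (gramDet 𝕜 x x))

/-- The projective distance `dist(x,y) = ‖x ∧ y‖ / (‖x‖ ‖y‖)` between two
nonzero vectors. -/
noncomputable def pdist (𝕜 : Type*) [RCLike 𝕜] {E : Type*} [NormedAddCommGroup E]
    [InnerProductSpace 𝕜 E] (x y : E) : ℝ :=
  wedgeNorm 𝕜 ![x, y] / (‖x‖ * ‖y‖)

/-- The projective distance between the lines spanned by the pure wedge products
`x₁ ∧ ⋯ ∧ xₘ` and `y₁ ∧ ⋯ ∧ yₘ` in `⋀ᵐ U`:
`dist(X,Y) = ‖X ∧ Y‖/(‖X‖‖Y‖) = √(‖X‖²‖Y‖² − |⟪X,Y⟫|²)/(‖X‖‖Y‖)`.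
When `x`, `y` are bases of `m`-dimensional subspaces `V₁`, `V₂`, this is the
projective distance `dist(V₁,V₂)` (it does not depend on the chosen bases). -/
noncomputable def pdistT (𝕜 : Type*) [RCLike 𝕜] {E : Type*} [NormedAddCommGroup E]
    [InnerProductSpace 𝕜 E] {m : ℕ} (x y : Fin m → E) : ℝ :=
  Real.sqrt (RCLike.re (gramDet 𝕜 x x) * RCLike.re (gramDet 𝕜 y y)
      - ‖gramDet 𝕜 x y‖ ^ 2) / (wedgeNorm 𝕜 x * wedgeNorm 𝕜 y)

/-- The distance `dist(x, V)` from a nonzero point to a subspace: the infimum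
(in fact minimum) of `dist(x,y)` over nonzero `y ∈ V`. -/
noncomputable def pdistPV (𝕜 : Type*) [RCLike 𝕜] {E : Type*} [NormedAddCommGroup E]
    [InnerProductSpace 𝕜 E] (x : E) (V : Submodule 𝕜 E) : ℝ :=
  sInf {d : ℝ | ∃ y ∈ V, y ≠ 0 ∧ d = pdist 𝕜 x y}

section Aux

variable {𝕜 : Type*} [RCLike 𝕜] {E : Type*} [NormedAddCommGroup E] [InnerProductSpace 𝕜 E]

lemma gramDet_pair (x y : E) :
    gramDet 𝕜 ![x, y] ![x, y] = ((‖x‖^2*‖y‖^2 - ‖(inner 𝕜 x y : 𝕜)‖^2 : ℝ) : 𝕜) := by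
  rw [gramDet, Matrix.det_fin_two]
  simp only [Matrix.of_apply, Matrix.cons_val', Matrix.cons_val_zero, Matrix.cons_val_one,
    Matrix.head_cons, Matrix.empty_val', Matrix.cons_val_fin_one]
  rw [← inner_conj_symm y x]
  rw [inner_self_eq_norm_sq_to_K (𝕜 := 𝕜) x, inner_self_eq_norm_sq_to_K (𝕜 := 𝕜) y,
    RCLike.mul_conj]
  push_cast
  ring

lemma pdist_eq (x y : E) :
    pdist 𝕜 x y = Real.sqrt (‖x‖^2*‖y‖^2 - ‖(inner 𝕜 x y : 𝕜)‖^2) / (‖x‖ * ‖y‖) := by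
  rw [pdist, wedgeNorm, gramDet_pair, RCLike.ofReal_re]

lemma pdist_nonneg (x y : E) : 0 ≤ pdist 𝕜 x y := by
  rw [pdist]
  exact div_nonneg (Real.sqrt_nonneg _) (by positivity)

lemma pdist_smul_left (c : 𝕜) (hc : c ≠ 0) (x y : E) :
    pdist 𝕜 (c • x) y = pdist 𝕜 x y := by
  rw [pdist_eq, pdist_eq, inner_smul_left, norm_mul, norm_smul, RCLike.norm_conj]
  have hc' : (0:ℝ) < ‖c‖ := norm_pos_iff.2 hc
  rw [mul_pow, mul_pow,
    show ‖c‖^2*‖x‖^2*‖y‖^2 - ‖c‖^2*‖(inner 𝕜 x y : 𝕜)‖^2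
      = ‖c‖^2*(‖x‖^2*‖y‖^2 - ‖(inner 𝕜 x y : 𝕜)‖^2) from by ring,
    Real.sqrt_mul (by positivity), Real.sqrt_sq (norm_nonneg c),
    show ‖c‖*‖x‖*‖y‖ = ‖c‖*(‖x‖*‖y‖) from by ring,
    mul_div_mul_left _ _ (ne_of_gt hc')]

lemma pdist_comm (x y : E) : pdist 𝕜 x y = pdist 𝕜 y x := by
  rw [pdist_eq, pdist_eq, ← inner_conj_symm x y, RCLike.norm_conj]
  ring_nf

lemma pdist_smul_right (c : 𝕜) (hc : c ≠ 0) (x y : E) :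
    pdist 𝕜 x (c • y) = pdist 𝕜 x y := by
  rw [pdist_comm, pdist_smul_left c hc, pdist_comm]

lemma pdist_unit {x y : E} (hx : ‖x‖ = 1) (hy : ‖y‖ = 1) :
    pdist 𝕜 x y = Real.sqrt (1 - ‖(inner 𝕜 x y : 𝕜)‖^2) := by
  rw [pdist_eq, hx, hy]; norm_num

lemma pdist_unit_eq_norm_sub {x y : E} (hx : ‖x‖ = 1) (hy : ‖y‖ = 1) :
    pdist 𝕜 x y = ‖x - (inner 𝕜 y x : 𝕜) • y‖ := by
  rw [pdist_unit hx hy]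
  have h : ‖x - (inner 𝕜 y x : 𝕜) • y‖^2 = 1 - ‖(inner 𝕜 x y : 𝕜)‖^2 := by
    rw [@norm_sub_sq 𝕜, inner_smul_right, ← inner_conj_symm x y, RCLike.mul_conj,
      norm_smul, RCLike.norm_conj, ← RCLike.ofReal_pow, RCLike.ofReal_re]
    simp [hx, hy]
    ring
  rw [← h, Real.sqrt_sq (norm_nonneg _)]

lemma proj_norm_le {z : E} (hz : ‖z‖ = 1) (v : E) :
    ‖v - (inner 𝕜 z v : 𝕜) • z‖ ≤ ‖v‖ := by
  have h : ‖v - (inner 𝕜 z v : 𝕜) • z‖^2 = ‖v‖^2 - ‖(inner 𝕜 z v : 𝕜)‖^2 := by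
    rw [@norm_sub_sq 𝕜, inner_smul_right, ← inner_conj_symm z v, RCLike.conj_mul,
      norm_smul, RCLike.norm_conj, ← RCLike.ofReal_pow, RCLike.ofReal_re]
    simp [hz, RCLike.norm_conj]
    ring
  nlinarith [norm_nonneg (v - (inner 𝕜 z v : 𝕜) • z), norm_nonneg v,
    sq_nonneg (‖(inner 𝕜 z v : 𝕜)‖)]

lemma pdist_triangle_unit {x y z : E} (hx : ‖x‖ = 1) (hy : ‖y‖ = 1) (hz : ‖z‖ = 1) :
    pdist 𝕜 x z ≤ pdist 𝕜 x y + pdist 𝕜 y z := by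
  set α : 𝕜 := inner 𝕜 y x with hα
  have hαle : ‖α‖ ≤ 1 := by
    calc ‖α‖ ≤ ‖y‖ * ‖x‖ := norm_inner_le_norm y x
    _ = 1 := by rw [hx, hy]; ring
  have key : x - (inner 𝕜 z x : 𝕜) • z =
      ((x - α • y) - (inner 𝕜 z (x - α • y) : 𝕜) • z) + α • (y - (inner 𝕜 z y : 𝕜) • z) := by
    rw [inner_sub_right, inner_smul_right]
    module
  calc pdist 𝕜 x z = ‖x - (inner 𝕜 z x : 𝕜) • z‖ := pdist_unit_eq_norm_sub hx hz
    _ ≤ ‖(x - α • y) - (inner 𝕜 z (x - α • y) : 𝕜) • z‖ + ‖α • (y - (inner 𝕜 z y : 𝕜) • z)‖ := by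
        rw [key]; exact norm_add_le _ _
    _ ≤ ‖x - α • y‖ + 1 * ‖y - (inner 𝕜 z y : 𝕜) • z‖ := by
        gcongr
        · exact proj_norm_le hz _
        · rw [norm_smul]; gcongr
    _ = pdist 𝕜 x y + pdist 𝕜 y z := by
        rw [one_mul, ← pdist_unit_eq_norm_sub hx hy, ← pdist_unit_eq_norm_sub hy hz]

lemma pdist_triangle {x y z : E} (hx : x ≠ 0) (hy : y ≠ 0) (hz : z ≠ 0) :
    pdist 𝕜 x z ≤ pdist 𝕜 x y + pdist 𝕜 y z := by
  have nx : ‖((‖x‖⁻¹ : ℝ) : 𝕜) • x‖ = 1 := by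
    rw [norm_smul]; simp [norm_ne_zero_iff.2 hx]
  have ny : ‖((‖y‖⁻¹ : ℝ) : 𝕜) • y‖ = 1 := by
    rw [norm_smul]; simp [norm_ne_zero_iff.2 hy]
  have nz : ‖((‖z‖⁻¹ : ℝ) : 𝕜) • z‖ = 1 := by
    rw [norm_smul]; simp [norm_ne_zero_iff.2 hz]
  have cx : (((‖x‖⁻¹ : ℝ) : 𝕜)) ≠ 0 := by
    simp [RCLike.ofReal_eq_zero, norm_ne_zero_iff.2 hx]
  have cy : (((‖y‖⁻¹ : ℝ) : 𝕜)) ≠ 0 := by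
    simp [RCLike.ofReal_eq_zero, norm_ne_zero_iff.2 hy]
  have cz : (((‖z‖⁻¹ : ℝ) : 𝕜)) ≠ 0 := by
    simp [RCLike.ofReal_eq_zero, norm_ne_zero_iff.2 hz]
  have h := pdist_triangle_unit (𝕜 := 𝕜) nx ny nz
  rwa [pdist_smul_left _ cx, pdist_smul_left _ cx, pdist_smul_left _ cy,
    pdist_smul_right _ cy, pdist_smul_right _ cz, pdist_smul_right _ cz] at h

lemma gramDet_mulVec {m : ℕ} (A B : Matrix (Fin m) (Fin m) 𝕜) (x y : Fin m → E) :
    gramDet 𝕜 (fun i => ∑ l, A i l • x l) (fun j => ∑ l, B j l • y l)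
      = (starRingEnd 𝕜) A.det * B.det * gramDet 𝕜 x y := by
  have hM : (Matrix.of fun i j => (inner 𝕜 ((fun i => ∑ l, A i l • x l) i)
      ((fun j => ∑ l, B j l • y l) j) : 𝕜))
      = A.map (starRingEnd 𝕜) * (Matrix.of fun i j => (inner 𝕜 (x i) (y j) : 𝕜)) * B.transpose := by
    ext i j
    simp only [Matrix.mul_apply, Matrix.of_apply, Matrix.map_apply, Matrix.transpose_apply]
    rw [sum_inner]
    simp only [inner_smul_left, inner_sum, inner_smul_right, Finset.mul_sum, Finset.sum_mul]
    rw [Finset.sum_comm]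
    exact Finset.sum_congr rfl fun l _ => Finset.sum_congr rfl fun l' _ => by ring
  have hdet : (A.map ⇑(starRingEnd 𝕜)).det = (starRingEnd 𝕜) A.det := by
    rw [RingHom.map_det]
    rfl
  rw [gramDet, hM, Matrix.det_mul, Matrix.det_mul, Matrix.det_transpose, hdet]
  rw [gramDet]
  ring

lemma pdistT_mulVec {m : ℕ} (A B : Matrix (Fin m) (Fin m) 𝕜) (hA : A.det ≠ 0)
    (hB : B.det ≠ 0) (x y : Fin m → E) :
    pdistT 𝕜 (fun i => ∑ l, A i l • x l) (fun j => ∑ l, B j l • y l) = pdistT 𝕜 x y := by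
  have gxx : gramDet 𝕜 (fun i => ∑ l, A i l • x l) (fun i => ∑ l, A i l • x l)
      = ((‖A.det‖^2 : ℝ) : 𝕜) * gramDet 𝕜 x x := by
    rw [gramDet_mulVec, RCLike.conj_mul]
    norm_cast
  have gyy : gramDet 𝕜 (fun i => ∑ l, B i l • y l) (fun i => ∑ l, B i l • y l)
      = ((‖B.det‖^2 : ℝ) : 𝕜) * gramDet 𝕜 y y := by
    rw [gramDet_mulVec, RCLike.conj_mul]
    norm_cast
  have gxy := gramDet_mulVec A B x y
  have hrxx : RCLike.re (gramDet 𝕜 (fun i => ∑ l, A i l • x l) (fun i => ∑ l, A i l • x l))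
      = ‖A.det‖^2 * RCLike.re (gramDet 𝕜 x x) := by
    rw [gxx, RCLike.re_ofReal_mul]
  have hryy : RCLike.re (gramDet 𝕜 (fun i => ∑ l, B i l • y l) (fun i => ∑ l, B i l • y l))
      = ‖B.det‖^2 * RCLike.re (gramDet 𝕜 y y) := by
    rw [gyy, RCLike.re_ofReal_mul]
  have hnxy : ‖gramDet 𝕜 (fun i => ∑ l, A i l • x l) (fun j => ∑ l, B j l • y l)‖^2
      = ‖A.det‖^2 * ‖B.det‖^2 * ‖gramDet 𝕜 x y‖^2 := by
    rw [gxy, norm_mul, norm_mul, RCLike.norm_conj]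
    ring
  have hwx : wedgeNorm 𝕜 (fun i => ∑ l, A i l • x l) = ‖A.det‖ * wedgeNorm 𝕜 x := by
    rw [wedgeNorm, wedgeNorm, hrxx, Real.sqrt_mul (by positivity),
      Real.sqrt_sq (norm_nonneg _)]
  have hwy : wedgeNorm 𝕜 (fun i => ∑ l, B i l • y l) = ‖B.det‖ * wedgeNorm 𝕜 y := by
    rw [wedgeNorm, wedgeNorm, hryy, Real.sqrt_mul (by positivity),
      Real.sqrt_sq (norm_nonneg _)]
  rw [pdistT, pdistT, hrxx, hryy, hnxy, hwx, hwy,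
    show ‖A.det‖^2 * RCLike.re (gramDet 𝕜 x x) * (‖B.det‖^2 * RCLike.re (gramDet 𝕜 y y))
      - ‖A.det‖^2 * ‖B.det‖^2 * ‖gramDet 𝕜 x y‖^2
      = (‖A.det‖ * ‖B.det‖)^2 * (RCLike.re (gramDet 𝕜 x x) * RCLike.re (gramDet 𝕜 y y)
          - ‖gramDet 𝕜 x y‖^2) from by ring,
    Real.sqrt_mul (by positivity), Real.sqrt_sq (by positivity),
    show ‖A.det‖ * wedgeNorm 𝕜 x * (‖B.det‖ * wedgeNorm 𝕜 y)
      = (‖A.det‖ * ‖B.det‖) * (wedgeNorm 𝕜 x * wedgeNorm 𝕜 y) from by ring,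
    mul_div_mul_left _ _ (mul_ne_zero (norm_ne_zero_iff.2 hA) (norm_ne_zero_iff.2 hB))]

lemma exists_matrix_repr {m : ℕ} {V : Submodule 𝕜 E} (hV : Module.finrank 𝕜 V = m + 1)
    {b b' : Fin (m + 1) → E} (hb : LinearIndependent 𝕜 b)
    (hbs : ∀ i, b i ∈ V)
    (hb' : LinearIndependent 𝕜 b') (hbs' : ∀ i, b' i ∈ V) :
    ∃ A : Matrix (Fin (m + 1)) (Fin (m + 1)) 𝕜, A.det ≠ 0 ∧
      ∀ i, b i = ∑ j, A i j • b' j := by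
  set v : Fin (m + 1) → V := fun i => ⟨b i, hbs i⟩ with hv
  set v' : Fin (m + 1) → V := fun i => ⟨b' i, hbs' i⟩ with hv'
  have hvli : LinearIndependent 𝕜 v :=
    LinearIndependent.of_comp V.subtype (by convert hb; rfl)
  have hvli' : LinearIndependent 𝕜 v' :=
    LinearIndependent.of_comp V.subtype (by convert hb'; rfl)
  have hcard : Fintype.card (Fin (m + 1)) = Module.finrank 𝕜 V := by simp [hV]
  let Bv : Module.Basis (Fin (m + 1)) 𝕜 V := basisOfLinearIndependentOfCardEqFinrank hvli hcard
  let Bv' : Module.Basis (Fin (m + 1)) 𝕜 V := basisOfLinearIndependentOfCardEqFinrank hvli' hcard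
  refine ⟨(Bv'.toMatrix v).transpose, ?_, ?_⟩
  · have hcoe : ⇑Bv = v := coe_basisOfLinearIndependentOfCardEqFinrank hvli hcard
    have hflip := Module.Basis.toMatrix_mul_toMatrix_flip Bv' Bv
    rw [hcoe] at hflip
    have := congrArg Matrix.det hflip
    rw [Matrix.det_mul, Matrix.det_one] at this
    rw [Matrix.det_transpose]
    exact left_ne_zero_of_mul_eq_one this
  · intro i
    have hcoe' : ⇑Bv' = v' := coe_basisOfLinearIndependentOfCardEqFinrank hvli' hcard
    have hrepr := Bv'.sum_repr (v i)
    have := congrArg (Subtype.val) hrepr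
    rw [show b i = ((v i : E)) from rfl, ← this]
    push_cast
    refine Finset.sum_congr rfl fun j _ => ?_
    rw [Matrix.transpose_apply, Module.Basis.toMatrix_apply, hcoe']

lemma gram_snoc {k : ℕ} (w : Fin k → E) (hw : Orthonormal 𝕜 w) (u₁ u₂ : E)
    (h1 : ∀ i, (inner 𝕜 (w i) u₁ : 𝕜) = 0) (h2 : ∀ i, (inner 𝕜 (w i) u₂ : 𝕜) = 0) :
    gramDet 𝕜 (Fin.snoc w u₁) (Fin.snoc w u₂) = (inner 𝕜 u₁ u₂ : 𝕜) := by
  have h1' : ∀ i, (inner 𝕜 u₁ (w i) : 𝕜) = 0 := fun i => by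
    rw [← inner_conj_symm u₁ (w i), h1 i, map_zero]
  have h2' : ∀ i, (inner 𝕜 u₂ (w i) : 𝕜) = 0 := fun i => by
    rw [← inner_conj_symm u₂ (w i), h2 i, map_zero]
  have hM : (Matrix.of fun i j => (inner 𝕜 ((Fin.snoc w u₁ : Fin (k+1) → E) i)
      ((Fin.snoc w u₂ : Fin (k+1) → E) j) : 𝕜))
      = Matrix.diagonal (fun i => if i = Fin.last k then (inner 𝕜 u₁ u₂ : 𝕜) else 1) := by
    ext i j
    refine Fin.lastCases ?_ ?_ i
    · refine Fin.lastCases ?_ ?_ j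
      · simp [Matrix.diagonal]
      · intro j'
        simp [Matrix.diagonal, Fin.snoc_castSucc, h1' j',
          (Fin.castSucc_lt_last j').ne']
    · intro i'
      refine Fin.lastCases ?_ ?_ j
      · simp [Matrix.diagonal, Fin.snoc_castSucc, h2 i',
          (Fin.castSucc_lt_last i').ne]
      · intro j'
        by_cases hij : i' = j'
        · subst hij
          simp [Matrix.diagonal, Fin.snoc_castSucc, (Fin.castSucc_lt_last i').ne,
            inner_self_eq_norm_sq_to_K, hw.1 i']
        · simp [Matrix.diagonal, Fin.snoc_castSucc, hij, hw.2 hij]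
  rw [gramDet, hM, Matrix.det_diagonal]
  rw [Finset.prod_eq_single (Fin.last k) (fun i _ hi => by simp [hi]) (by simp)]
  simp

lemma orthonormal_snoc {k : ℕ} {w : Fin k → E} (hw : Orthonormal 𝕜 w) {u : E}
    (hu : ‖u‖ = 1) (h : ∀ i, (inner 𝕜 (w i) u : 𝕜) = 0) :
    Orthonormal 𝕜 (Fin.snoc w u : Fin (k+1) → E) := by
  rw [orthonormal_iff_ite]
  intro i j
  have h' : ∀ i, (inner 𝕜 u (w i) : 𝕜) = 0 := fun i => by
    rw [← inner_conj_symm u (w i), h i, map_zero]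
  refine Fin.lastCases ?_ ?_ i
  · refine Fin.lastCases ?_ ?_ j
    · simp [inner_self_eq_norm_sq_to_K, hu]
    · intro j'
      simp [Fin.snoc_castSucc, h' j', (Fin.castSucc_lt_last j').ne']
  · intro i'
    refine Fin.lastCases ?_ ?_ j
    · simp [Fin.snoc_castSucc, h i', (Fin.castSucc_lt_last i').ne]
    · intro j'
      by_cases hij : i' = j'
      · subst hij
        simp [Fin.snoc_castSucc, inner_self_eq_norm_sq_to_K, hw.1 i']
      · simp [Fin.snoc_castSucc, hij, hw.2 hij]

lemma pdistT_snoc {k : ℕ} {w : Fin k → E} (hw : Orthonormal 𝕜 w) {u₁ u₂ : E} {t : ℝ}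
    (hu₁ : ‖u₁‖ = 1) (hu₂ : ‖u₂‖ = 1)
    (h1 : ∀ i, (inner 𝕜 (w i) u₁ : 𝕜) = 0) (h2 : ∀ i, (inner 𝕜 (w i) u₂ : 𝕜) = 0)
    (ht : (inner 𝕜 u₁ u₂ : 𝕜) = ((t : ℝ) : 𝕜)) :
    pdistT 𝕜 (Fin.snoc w u₁ : Fin (k+1) → E) (Fin.snoc w u₂ : Fin (k+1) → E)
      = Real.sqrt (1 - t^2) := by
  have g11 : gramDet 𝕜 (Fin.snoc w u₁ : Fin (k+1) → E) (Fin.snoc w u₁ : Fin (k+1) → E)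
      = 1 := by
    rw [gram_snoc w hw u₁ u₁ h1 h1, inner_self_eq_norm_sq_to_K, hu₁]
    norm_num
  have g22 : gramDet 𝕜 (Fin.snoc w u₂ : Fin (k+1) → E) (Fin.snoc w u₂ : Fin (k+1) → E)
      = 1 := by
    rw [gram_snoc w hw u₂ u₂ h2 h2, inner_self_eq_norm_sq_to_K, hu₂]
    norm_num
  have g12 : gramDet 𝕜 (Fin.snoc w u₁ : Fin (k+1) → E) (Fin.snoc w u₂ : Fin (k+1) → E)
      = ((t : ℝ) : 𝕜) := by
    rw [gram_snoc w hw u₁ u₂ h1 h2, ht]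
  rw [pdistT, wedgeNorm, wedgeNorm, g11, g22, g12]
  simp [RCLike.norm_ofReal, sq_abs]

lemma pdist_self {y : E} : pdist 𝕜 y y = 0 := by
  rw [pdist_eq, inner_self_eq_norm_sq_to_K, norm_pow, RCLike.norm_ofReal, abs_norm,
    show ‖y‖^2*‖y‖^2 - (‖y‖^2)^2 = 0 from by ring, Real.sqrt_zero, zero_div]

lemma pdistT_nonneg {m : ℕ} (x y : Fin m → E) : 0 ≤ pdistT 𝕜 x y := by
  rw [pdistT]
  exact div_nonneg (Real.sqrt_nonneg _)
    (mul_nonneg (Real.sqrt_nonneg _) (Real.sqrt_nonneg _))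

lemma key_step {k : ℕ} [FiniteDimensional 𝕜 E] {V₁ V₂ : Submodule 𝕜 E}
    (h₁ : Module.finrank 𝕜 V₁ = k + 1) (h₂ : Module.finrank 𝕜 V₂ = k + 1)
    (hW : k ≤ Module.finrank 𝕜 (V₁ ⊓ V₂ : Submodule 𝕜 E))
    {b₁ b₂ : Fin (k + 1) → E}
    (hb₁ : LinearIndependent 𝕜 b₁) (hb₁s : Submodule.span 𝕜 (Set.range b₁) = V₁)
    (hb₂ : LinearIndependent 𝕜 b₂) (hb₂s : Submodule.span 𝕜 (Set.range b₂) = V₂)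
    {y₁ : E} (hy₁ : y₁ ∈ V₁) (hy₁0 : y₁ ≠ 0) :
    ∃ y₂ ∈ V₂, y₂ ≠ 0 ∧ pdist 𝕜 y₁ y₂ ≤ pdistT 𝕜 b₁ b₂ := by
  classical
  set W : Submodule 𝕜 E := V₁ ⊓ V₂ with hWdef
  have hWle : Module.finrank 𝕜 W ≤ k + 1 := h₁ ▸ Submodule.finrank_mono inf_le_left
  rcases eq_or_lt_of_le hW with hWk | hlt
  case inr =>
    -- finrank W = k + 1, so V₁ = V₂
    have hWk1 : Module.finrank 𝕜 W = k + 1 := le_antisymm hWle hlt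
    have e1 : W = V₁ := Submodule.eq_of_le_of_finrank_eq inf_le_left (by rw [hWk1, h₁])
    have e2 : W = V₂ := Submodule.eq_of_le_of_finrank_eq inf_le_right (by rw [hWk1, h₂])
    refine ⟨y₁, by rw [← e2, e1]; exact hy₁, hy₁0, ?_⟩
    rw [pdist_self]
    exact pdistT_nonneg _ _
  case inl =>
    have hWk : Module.finrank 𝕜 W = k := hWk.symm
    have hWV₁ : W ≤ V₁ := inf_le_left
    have hWV₂ : W ≤ V₂ := inf_le_right
    set U₁ : Submodule 𝕜 E := Wᗮ ⊓ V₁ with hU₁def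
    set U₂ : Submodule 𝕜 E := Wᗮ ⊓ V₂ with hU₂def
    have hsup₁ : W ⊔ U₁ = V₁ := Submodule.sup_orthogonal_inf_of_hasOrthogonalProjection hWV₁
    have hsup₂ : W ⊔ U₂ = V₂ := Submodule.sup_orthogonal_inf_of_hasOrthogonalProjection hWV₂
    have hWU₁ : W ⊓ U₁ = ⊥ := by
      rw [eq_bot_iff]
      intro z hz
      have h1 : z ∈ W := hz.1
      have h2 : z ∈ Wᗮ := hz.2.1
      have h3 := Submodule.inner_right_of_mem_orthogonal h1 h2
      exact inner_self_eq_zero.1 h3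
    have hWU₂ : W ⊓ U₂ = ⊥ := by
      rw [eq_bot_iff]
      intro z hz
      exact inner_self_eq_zero.1 (Submodule.inner_right_of_mem_orthogonal hz.1 hz.2.1)
    have hU₁rk : Module.finrank 𝕜 U₁ = 1 := by
      have h := Submodule.finrank_sup_add_finrank_inf_eq W U₁
      rw [hsup₁, hWU₁, h₁, hWk, finrank_bot] at h
      omega
    have hU₂rk : Module.finrank 𝕜 U₂ = 1 := by
      have h := Submodule.finrank_sup_add_finrank_inf_eq W U₂
      rw [hsup₂, hWU₂, h₂, hWk, finrank_bot] at h
      omega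
    have hex₁ : ∃ u ∈ U₁, ‖u‖ = 1 := by
      obtain ⟨u', hmem, h0⟩ := Submodule.exists_mem_ne_zero_of_ne_bot
        (p := U₁) (by intro h; rw [h, finrank_bot] at hU₁rk; omega)
      refine ⟨((‖u'‖⁻¹ : ℝ) : 𝕜) • u', Submodule.smul_mem _ _ hmem, ?_⟩
      rw [norm_smul, RCLike.norm_ofReal, abs_inv, abs_norm]
      field_simp [norm_ne_zero_iff.2 h0]
    obtain ⟨u₁, hu₁mem, hu₁norm⟩ := hex₁
    have hu₁0 : u₁ ≠ 0 := by
      intro h; rw [h, norm_zero] at hu₁norm; norm_num at hu₁norm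
    have hex₂ : ∃ (u : E) (t : ℝ), u ∈ U₂ ∧ ‖u‖ = 1 ∧ 0 ≤ t ∧ t ≤ 1 ∧
        (inner 𝕜 u₁ u : 𝕜) = ((t : ℝ) : 𝕜) := by
      obtain ⟨u', hmem, h0⟩ := Submodule.exists_mem_ne_zero_of_ne_bot
        (p := U₂) (by intro h; rw [h, finrank_bot] at hU₂rk; omega)
      have hmemn : ((‖u'‖⁻¹ : ℝ) : 𝕜) • u' ∈ U₂ := Submodule.smul_mem _ _ hmem
      have hnn : ‖((‖u'‖⁻¹ : ℝ) : 𝕜) • u'‖ = 1 := by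
        rw [norm_smul, RCLike.norm_ofReal, abs_inv, abs_norm]
        field_simp [norm_ne_zero_iff.2 h0]
      by_cases hs : (inner 𝕜 u₁ (((‖u'‖⁻¹ : ℝ) : 𝕜) • u') : 𝕜) = 0
      · exact ⟨_, 0, hmemn, hnn, le_refl 0, zero_le_one, by rw [hs]; norm_num⟩
      · refine ⟨((starRingEnd 𝕜) (inner 𝕜 u₁ (((‖u'‖⁻¹ : ℝ) : 𝕜) • u'))
            / ((‖(inner 𝕜 u₁ (((‖u'‖⁻¹ : ℝ) : 𝕜) • u') : 𝕜)‖ : ℝ) : 𝕜)) • (((‖u'‖⁻¹ : ℝ) : 𝕜) • u'),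
          ‖(inner 𝕜 u₁ (((‖u'‖⁻¹ : ℝ) : 𝕜) • u') : 𝕜)‖,
          Submodule.smul_mem _ _ hmemn, ?_, norm_nonneg _, ?_, ?_⟩
        · rw [norm_smul, norm_div, RCLike.norm_conj, RCLike.norm_ofReal, abs_norm, hnn,
            mul_one]
          exact div_self (norm_ne_zero_iff.2 hs)
        · calc ‖(inner 𝕜 u₁ (((‖u'‖⁻¹ : ℝ) : 𝕜) • u') : 𝕜)‖
              ≤ ‖u₁‖ * ‖((‖u'‖⁻¹ : ℝ) : 𝕜) • u'‖ := norm_inner_le_norm _ _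
          _ = 1 := by rw [hu₁norm, hnn, one_mul]
        · rw [inner_smul_right, div_mul_eq_mul_div, mul_comm, RCLike.mul_conj,
            show ∀ r : ℝ, ((r:ℝ):𝕜)^2 = ((r:ℝ):𝕜) * ((r:ℝ):𝕜) from fun r => sq _,
            mul_div_assoc, div_self (by simpa using norm_ne_zero_iff.2 hs), mul_one]
    obtain ⟨u₂, t, hu₂mem, hu₂norm, ht0, ht1, ht⟩ := hex₂
    have hu₂0 : u₂ ≠ 0 := by
      intro h; rw [h, norm_zero] at hu₂norm; norm_num at hu₂norm
    have hexw : ∃ w : Fin k → E, Orthonormal 𝕜 w ∧ ∀ i, w i ∈ W := by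
      refine ⟨fun i => ((stdOrthonormalBasis 𝕜 W) (Fin.cast (by rw [hWk]) i) : E), ?_,
        fun i => Subtype.coe_prop _⟩
      have ho := (stdOrthonormalBasis 𝕜 W).orthonormal.comp
        (Fin.cast (by rw [hWk] : k = Module.finrank 𝕜 ↥W))
        (fun a b h => Fin.ext (by simpa using congrArg Fin.val h))
      exact ho.comp_linearIsometry W.subtypeₗᵢ
    obtain ⟨w, hworth, hwmem⟩ := hexw
    have hu₁W : u₁ ∈ Wᗮ := hu₁mem.1
    have hu₂W : u₂ ∈ Wᗮ := hu₂mem.1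
    have h1 : ∀ i, (inner 𝕜 (w i) u₁ : 𝕜) = 0 :=
      fun i => Submodule.inner_right_of_mem_orthogonal (hwmem i) hu₁W
    have h2 : ∀ i, (inner 𝕜 (w i) u₂ : 𝕜) = 0 :=
      fun i => Submodule.inner_right_of_mem_orthogonal (hwmem i) hu₂W
    have hb₁'orth : Orthonormal 𝕜 (Fin.snoc w u₁ : Fin (k+1) → E) :=
      orthonormal_snoc hworth hu₁norm h1
    have hb₂'orth : Orthonormal 𝕜 (Fin.snoc w u₂ : Fin (k+1) → E) :=
      orthonormal_snoc hworth hu₂norm h2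
    have hb₁'mem : ∀ i, (Fin.snoc w u₁ : Fin (k+1) → E) i ∈ V₁ := by
      intro i
      refine Fin.lastCases ?_ ?_ i
      · rw [Fin.snoc_last]; exact hu₁mem.2
      · intro i'; rw [Fin.snoc_castSucc]; exact hWV₁ (hwmem i')
    have hb₂'mem : ∀ i, (Fin.snoc w u₂ : Fin (k+1) → E) i ∈ V₂ := by
      intro i
      refine Fin.lastCases ?_ ?_ i
      · rw [Fin.snoc_last]; exact hu₂mem.2
      · intro i'; rw [Fin.snoc_castSucc]; exact hWV₂ (hwmem i')
    have hb₁mem : ∀ i, b₁ i ∈ V₁ := fun i =>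
      hb₁s ▸ Submodule.subset_span (Set.mem_range_self i)
    have hb₂mem : ∀ i, b₂ i ∈ V₂ := fun i =>
      hb₂s ▸ Submodule.subset_span (Set.mem_range_self i)
    obtain ⟨A, hA0, hA⟩ := exists_matrix_repr h₁ hb₁ hb₁mem
      hb₁'orth.linearIndependent hb₁'mem
    obtain ⟨B, hB0, hB⟩ := exists_matrix_repr h₂ hb₂ hb₂mem
      hb₂'orth.linearIndependent hb₂'mem
    have hpdT : pdistT 𝕜 b₁ b₂ = Real.sqrt (1 - t^2) := by
      rw [funext hA, funext hB, pdistT_mulVec A B hA0 hB0]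
      exact pdistT_snoc hworth hu₁norm hu₂norm h1 h2 ht
    -- decompose y₁
    have hspan₁ : (𝕜 ∙ u₁) = U₁ := by
      refine Submodule.eq_of_le_of_finrank_eq
        ((Submodule.span_singleton_le_iff_mem _ _).2 hu₁mem) ?_
      rw [finrank_span_singleton hu₁0, hU₁rk]
    have hy₁' : y₁ ∈ W ⊔ U₁ := by rw [hsup₁]; exact hy₁
    obtain ⟨v, hv, z, hz, rfl⟩ := Submodule.mem_sup.1 hy₁'
    rw [← hspan₁] at hz
    obtain ⟨c₁, rfl⟩ := Submodule.mem_span_singleton.1 hz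
    have hvu₁ : (inner 𝕜 v u₁ : 𝕜) = 0 := Submodule.inner_right_of_mem_orthogonal hv hu₁W
    have hvu₂ : (inner 𝕜 v u₂ : 𝕜) = 0 := Submodule.inner_right_of_mem_orthogonal hv hu₂W
    have hu₁v : (inner 𝕜 u₁ v : 𝕜) = 0 := by
      rw [← inner_conj_symm u₁ v, hvu₁, map_zero]
    have hy₂mem : v + c₁ • u₂ ∈ V₂ :=
      Submodule.add_mem _ (hWV₂ hv) (Submodule.smul_mem _ _ hu₂mem.2)
    have hny₁ : ‖v + c₁ • u₁‖^2 = ‖v‖^2 + ‖c₁‖^2 := by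
      rw [@norm_add_sq 𝕜, inner_smul_right, hvu₁, mul_zero, norm_smul, hu₁norm, mul_one]
      simp
    have hny₂ : ‖v + c₁ • u₂‖^2 = ‖v‖^2 + ‖c₁‖^2 := by
      rw [@norm_add_sq 𝕜, inner_smul_right, hvu₂, mul_zero, norm_smul, hu₂norm, mul_one]
      simp
    have hab_pos : 0 < ‖v‖^2 + ‖c₁‖^2 := by
      rw [← hny₁]
      exact pow_pos (norm_pos_iff.2 hy₁0) 2
    have hy₂0 : v + c₁ • u₂ ≠ 0 := by
      intro h
      rw [h, norm_zero] at hny₂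
      norm_num at hny₂
      linarith
    have hinner : (inner 𝕜 (v + c₁ • u₁) (v + c₁ • u₂) : 𝕜)
        = ((‖v‖^2 + ‖c₁‖^2 * t : ℝ) : 𝕜) := by
      simp only [inner_add_left, inner_add_right, inner_smul_left, inner_smul_right]
      rw [hvu₂, hu₁v, ht, inner_self_eq_norm_sq_to_K]
      simp only [mul_zero, zero_add, add_zero]
      rw [← mul_assoc, RCLike.mul_conj]
      push_cast
      ring
    have hnorm₁ : ‖v + c₁ • u₁‖ = Real.sqrt (‖v‖^2 + ‖c₁‖^2) := by
      rw [← hny₁, Real.sqrt_sq (norm_nonneg _)]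
    have hnorm₂ : ‖v + c₁ • u₂‖ = Real.sqrt (‖v‖^2 + ‖c₁‖^2) := by
      rw [← hny₂, Real.sqrt_sq (norm_nonneg _)]
    refine ⟨v + c₁ • u₂, hy₂mem, hy₂0, ?_⟩
    rw [hpdT, pdist_eq, hny₁, hny₂, hinner, hnorm₁, hnorm₂,
      Real.mul_self_sqrt hab_pos.le, RCLike.norm_ofReal,
      abs_of_nonneg (by positivity : (0:ℝ) ≤ ‖v‖^2 + ‖c₁‖^2 * t)]
    rw [div_le_iff₀ hab_pos]
    have h1t2 : (0:ℝ) ≤ 1 - t^2 := by nlinarith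
    rw [show Real.sqrt (1 - t^2) * (‖v‖^2 + ‖c₁‖^2)
        = Real.sqrt ((1 - t^2) * (‖v‖^2 + ‖c₁‖^2)^2) from by
      rw [Real.sqrt_mul h1t2, Real.sqrt_sq hab_pos.le]]
    apply Real.sqrt_le_sqrt
    nlinarith [mul_nonneg (mul_nonneg (sq_nonneg ‖v‖) (sq_nonneg ‖c₁‖))
        (mul_nonneg ht0 (sub_nonneg.2 ht1)),
      mul_nonneg (mul_nonneg (sq_nonneg ‖v‖) (sq_nonneg ‖v‖))
        (mul_nonneg (sub_nonneg.2 ht1) (by linarith : (0:ℝ) ≤ 1 + t))]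

end Aux

/-- for `(m−1)`-dimensional subspaces `V₁, V₂` of `Lⁿ` (here
`m = k+2`, `L = ℝ` or `ℂ`) with `dim(V₁ ∩ V₂) ≥ m−2 = k`, and any nonzero
`x ∈ Lⁿ`, we have `dist(x,V₂) ≤ dist(x,V₁) + dist(V₁,V₂)`, where
`dist(V₁,V₂)` is computed via bases `b₁`, `b₂` of `V₁`, `V₂`. -/
theorem stmt7 {𝕜 : Type*} [RCLike 𝕜] {n k : ℕ} (hn : k + 2 ≤ n)
    (V₁ V₂ : Submodule 𝕜 (EuclideanSpace 𝕜 (Fin n)))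
    (h₁ : Module.finrank 𝕜 V₁ = k + 1) (h₂ : Module.finrank 𝕜 V₂ = k + 1)
    (hW : k ≤ Module.finrank 𝕜 (V₁ ⊓ V₂ : Submodule 𝕜 (EuclideanSpace 𝕜 (Fin n))))
    (b₁ b₂ : Fin (k + 1) → EuclideanSpace 𝕜 (Fin n))
    (hb₁ : LinearIndependent 𝕜 b₁) (hb₁s : Submodule.span 𝕜 (Set.range b₁) = V₁)
    (hb₂ : LinearIndependent 𝕜 b₂) (hb₂s : Submodule.span 𝕜 (Set.range b₂) = V₂)
    (x : EuclideanSpace 𝕜 (Fin n)) (hx : x ≠ 0) :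
    pdistPV 𝕜 x V₂ ≤ pdistPV 𝕜 x V₁ + pdistT 𝕜 b₁ b₂ := by
  have hbdd : ∀ V : Submodule 𝕜 (EuclideanSpace 𝕜 (Fin n)),
      BddBelow {d : ℝ | ∃ y ∈ V, y ≠ 0 ∧ d = pdist 𝕜 x y} := by
    intro V
    exact ⟨0, fun d ⟨y, _, _, hd⟩ => hd ▸ pdist_nonneg x y⟩
  have hS₁ne : {d : ℝ | ∃ y ∈ V₁, y ≠ 0 ∧ d = pdist 𝕜 x y}.Nonempty := by
    obtain ⟨y, hy, hy0⟩ := Submodule.exists_mem_ne_zero_of_ne_bot (p := V₁)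
      (by intro h; rw [h, finrank_bot] at h₁; omega)
    exact ⟨_, y, hy, hy0, rfl⟩
  rw [pdistPV, ← sub_le_iff_le_add]
  refine le_csInf hS₁ne ?_
  rintro d ⟨y₁, hy₁, hy₁0, rfl⟩
  rw [sub_le_iff_le_add]
  obtain ⟨y₂, hy₂, hy₂0, hle⟩ := key_step h₁ h₂ hW hb₁ hb₁s hb₂ hb₂s hy₁ hy₁0
  calc pdistPV 𝕜 x V₂ ≤ pdist 𝕜 x y₂ := csInf_le (hbdd V₂) ⟨y₂, hy₂, hy₂0, rfl⟩
    _ ≤ pdist 𝕜 x y₁ + pdist 𝕜 y₁ y₂ := pdist_triangle hx hy₁0 hy₂0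
    _ ≤ pdist 𝕜 x y₁ + pdistT 𝕜 b₁ b₂ := by linarith
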